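/- Let x, y, z ∈ ℂ be pairwise distinct, let m, k, l be positive integers, and let r be an integer with 1 ≤ r ≤ m + 1. Then Σ_{s=1}^{k+1} binom(k+l−s, k+1−s)·binom(m+s−r, m+1−r)·(−1)^{l+s}·(2k+1−s)·(2m+1−r) / ((z−y)^{l+k+1−s}·(y−x)^{m+s+1−r}) − Σ_{s=1}^{l+1} binom(l+k−s, l+1−s)·binom(m+s−r, m+1−r)·(−1)^{k+s}·(2l+1−s)·(2m+1−r) / ((y−z)^{l+k+1−s}·(z−x)^{m+s+1−r}) = Σ_{s=r−1}^{m+1} binom(m+k−s, m+1−s)·binom(s+l−r, s+1−r)·(−1)^{k+l}·(2m+1−s)·(2s+1−r) / ((y−x)^{k+m+1−s}·(z−x)^{l+s+1−r}) − Σ_{s=r−1}^{m+1} binom(m+l−s, m+1−s)·binom(s+k−r, s+1−r)·(−1)^{k+l}·(2m+1−s)·(2s+1−r) / ((z−x)^{l+m+1−s}·(y−x)^{k+s+1−r}). -/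

import Mathlib

set_option maxHeartbeats 1000000

open Finset

namespace St4

lemma hderiv1 (c A u : ℂ) (E : ℕ) (x : ℂ) (hu : u ≠ x) (hA : A ≠ 0) :
    HasDerivAt (fun t => c / (A * (u - t) ^ (E + 1)))
      ((E + 1 : ℂ) * c / (A * (u - x) ^ (E + 2))) x := by
  have hsub : HasDerivAt (fun t : ℂ => u - t) (-1) x := by
    simpa using (hasDerivAt_const x u).fun_sub (hasDerivAt_id x)
  have hpow : HasDerivAt (fun t : ℂ => (u - t) ^ (E + 1))
      (((E : ℂ) + 1) * (u - x) ^ E * (-1)) x := by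
    simpa using hsub.fun_pow (E + 1)
  have hden : HasDerivAt (fun t : ℂ => A * (u - t) ^ (E + 1))
      (A * (((E : ℂ) + 1) * (u - x) ^ E * (-1))) x := hpow.const_mul A
  have hne : A * (u - x) ^ (E + 1) ≠ 0 :=
    mul_ne_zero hA (pow_ne_zero _ (sub_ne_zero.mpr hu))
  have h := (hasDerivAt_const x c).fun_div hden hne
  refine h.congr_deriv ?_
  have h0 : u - x ≠ 0 := sub_ne_zero.mpr hu
  field_simp
  ring

lemma hderiv2 (c u v : ℂ) (E F : ℕ) (x : ℂ) (hu : u ≠ x) (hv : v ≠ x) :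
    HasDerivAt (fun t => c / ((u - t) ^ (E + 1) * (v - t) ^ (F + 1)))
      ((E + 1 : ℂ) * c / ((u - x) ^ (E + 2) * (v - x) ^ (F + 1))
        + (F + 1 : ℂ) * c / ((u - x) ^ (E + 1) * (v - x) ^ (F + 2))) x := by
  have hsubu : HasDerivAt (fun t : ℂ => u - t) (-1) x := by
    simpa using (hasDerivAt_const x u).fun_sub (hasDerivAt_id x)
  have hsubv : HasDerivAt (fun t : ℂ => v - t) (-1) x := by
    simpa using (hasDerivAt_const x v).fun_sub (hasDerivAt_id x)
  have hpu : HasDerivAt (fun t : ℂ => (u - t) ^ (E + 1))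
      (((E : ℂ) + 1) * (u - x) ^ E * (-1)) x := by simpa using hsubu.fun_pow (E + 1)
  have hpv : HasDerivAt (fun t : ℂ => (v - t) ^ (F + 1))
      (((F : ℂ) + 1) * (v - x) ^ F * (-1)) x := by simpa using hsubv.fun_pow (F + 1)
  have hden := hpu.fun_mul hpv
  have hne : (u - x) ^ (E + 1) * (v - x) ^ (F + 1) ≠ 0 :=
    mul_ne_zero (pow_ne_zero _ (sub_ne_zero.mpr hu)) (pow_ne_zero _ (sub_ne_zero.mpr hv))
  have h := (hasDerivAt_const x c).fun_div hden hne
  refine h.congr_deriv ?_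
  have h0 : u - x ≠ 0 := sub_ne_zero.mpr hu
  have h1 : v - x ≠ 0 := sub_ne_zero.mpr hv
  field_simp
  ring

lemma hderiv3 (c u w : ℂ) (E F : ℕ) (x : ℂ) (hu : u ≠ x) (hw : x ≠ w) :
    HasDerivAt (fun t => c / ((u - t) ^ (E + 1) * (t - w) ^ (F + 1)))
      ((E + 1 : ℂ) * c / ((u - x) ^ (E + 2) * (x - w) ^ (F + 1))
        - (F + 1 : ℂ) * c / ((u - x) ^ (E + 1) * (x - w) ^ (F + 2))) x := by
  have hsubu : HasDerivAt (fun t : ℂ => u - t) (-1) x := by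
    simpa using (hasDerivAt_const x u).fun_sub (hasDerivAt_id x)
  have hsubw : HasDerivAt (fun t : ℂ => t - w) (1 : ℂ) x := by
    simpa using (hasDerivAt_id x).fun_sub (hasDerivAt_const x w)
  have hpu : HasDerivAt (fun t : ℂ => (u - t) ^ (E + 1))
      (((E : ℂ) + 1) * (u - x) ^ E * (-1)) x := by simpa using hsubu.fun_pow (E + 1)
  have hpw : HasDerivAt (fun t : ℂ => (t - w) ^ (F + 1))
      (((F : ℂ) + 1) * (x - w) ^ F * 1) x := by simpa using hsubw.fun_pow (F + 1)
  have hden := hpu.fun_mul hpw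
  have hne : (u - x) ^ (E + 1) * (x - w) ^ (F + 1) ≠ 0 :=
    mul_ne_zero (pow_ne_zero _ (sub_ne_zero.mpr hu)) (pow_ne_zero _ (sub_ne_zero.mpr (hw)))
  have h := (hasDerivAt_const x c).fun_div hden hne
  refine h.congr_deriv ?_
  have h0 : u - x ≠ 0 := sub_ne_zero.mpr hu
  have h1 : x - w ≠ 0 := sub_ne_zero.mpr hw
  field_simp
  ring

lemma hderiv4 (c A w : ℂ) (F : ℕ) (x : ℂ) (hw : x ≠ w) (hA : A ≠ 0) :
    HasDerivAt (fun t => c / ((t - w) ^ (F + 1) * A))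
      (-((F + 1 : ℂ) * c / ((x - w) ^ (F + 2) * A))) x := by
  have hsubw : HasDerivAt (fun t : ℂ => t - w) (1 : ℂ) x := by
    simpa using (hasDerivAt_id x).fun_sub (hasDerivAt_const x w)
  have hpw : HasDerivAt (fun t : ℂ => (t - w) ^ (F + 1))
      (((F : ℂ) + 1) * (x - w) ^ F * 1) x := by simpa using hsubw.fun_pow (F + 1)
  have hden : HasDerivAt (fun t : ℂ => (t - w) ^ (F + 1) * A)
      ((((F : ℂ) + 1) * (x - w) ^ F * 1) * A) x := hpw.mul_const A
  have hne : (x - w) ^ (F + 1) * A ≠ 0 :=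
    mul_ne_zero (pow_ne_zero _ (sub_ne_zero.mpr hw)) hA
  have h := (hasDerivAt_const x c).fun_div hden hne
  refine h.congr_deriv ?_
  have h1 : x - w ≠ 0 := sub_ne_zero.mpr hw
  field_simp
  ring

noncomputable def T1 (y z x : ℂ) (k l : ℕ) : ℂ :=
  ∑ s ∈ Icc 1 (k+1), ((k+l-s).choose (k+1-s) : ℂ) * (-1)^(l+s) * ((2*k+1-s : ℕ) : ℂ) /
    ((z-y)^(l+k+1-s) * (y-x)^s)

noncomputable def RB (y z x : ℂ) (k l : ℕ) : ℂ :=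
  (-1)^(k+l) * ((l : ℂ) / ((y-x)^k * (z-x)^(l+1)) - (k : ℂ) / ((y-x)^(k+1) * (z-x)^l))

noncomputable def S1 (y z x : ℂ) (m k l r : ℕ) : ℂ :=
  ∑ s ∈ Icc 1 (k+1), ((k+l-s).choose (k+1-s) : ℂ) * ((m+s-r).choose (m+1-r) : ℂ) *
    (-1)^(l+s) * ((2*k+1-s : ℕ) : ℂ) * ((2*m+1-r : ℕ) : ℂ) /
    ((z-y)^(l+k+1-s) * (y-x)^(m+s+1-r))

noncomputable def S3 (y z x : ℂ) (m k l r : ℕ) : ℂ :=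
  ∑ s ∈ Icc (r-1) (m+1), ((m+k-s).choose (m+1-s) : ℂ) * ((s+l-r).choose (s+1-r) : ℂ) *
    (-1)^(k+l) * ((2*m+1-s : ℕ) : ℂ) * ((2*s+1-r : ℕ) : ℂ) /
    ((y-x)^(k+m+1-s) * (z-x)^(l+s+1-r))

/-- sum-derivative: terms c s / (A s * (u-t)^(p s)), constants A s. -/
lemma sumDeriv1 (c A : ℕ → ℂ) (p : ℕ → ℕ) (S : Finset ℕ) (u x : ℂ) (hu : u ≠ x)
    (hA : ∀ s ∈ S, A s ≠ 0) (hp : ∀ s ∈ S, 1 ≤ p s) :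
    HasDerivAt (fun t => ∑ s ∈ S, c s / (A s * (u - t) ^ (p s)))
      (∑ s ∈ S, (p s : ℂ) * c s / (A s * (u - x) ^ (p s + 1))) x := by
  apply HasDerivAt.fun_sum
  intro s hs
  obtain ⟨E, hE⟩ : ∃ E, p s = E + 1 := ⟨p s - 1, by have := hp s hs; omega⟩
  rw [hE]
  have h := hderiv1 (c s) (A s) u E x hu (hA s hs)
  exact_mod_cast h

lemma sumDeriv2 (c : ℕ → ℂ) (p q : ℕ → ℕ) (S : Finset ℕ) (u v x : ℂ)
    (hu : u ≠ x) (hv : v ≠ x) (hp : ∀ s ∈ S, 1 ≤ p s) (hq : ∀ s ∈ S, 1 ≤ q s) :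
    HasDerivAt (fun t => ∑ s ∈ S, c s / ((u - t) ^ (p s) * (v - t) ^ (q s)))
      (∑ s ∈ S, ((p s : ℂ) * c s / ((u - x) ^ (p s + 1) * (v - x) ^ (q s))
        + (q s : ℂ) * c s / ((u - x) ^ (p s) * (v - x) ^ (q s + 1)))) x := by
  apply HasDerivAt.fun_sum
  intro s hs
  obtain ⟨E, hE⟩ : ∃ E, p s = E + 1 := ⟨p s - 1, by have := hp s hs; omega⟩
  obtain ⟨F, hF⟩ : ∃ F, q s = F + 1 := ⟨q s - 1, by have := hq s hs; omega⟩
  rw [hE, hF]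
  have h := hderiv2 (c s) u v E F x hu hv
  exact_mod_cast h

lemma sumDeriv3 (c : ℕ → ℂ) (p q : ℕ → ℕ) (S : Finset ℕ) (u w x : ℂ)
    (hu : u ≠ x) (hw : x ≠ w) (hp : ∀ s ∈ S, 1 ≤ p s) (hq : ∀ s ∈ S, 1 ≤ q s) :
    HasDerivAt (fun t => ∑ s ∈ S, c s / ((u - t) ^ (p s) * (t - w) ^ (q s)))
      (∑ s ∈ S, ((p s : ℂ) * c s / ((u - x) ^ (p s + 1) * (x - w) ^ (q s))
        - (q s : ℂ) * c s / ((u - x) ^ (p s) * (x - w) ^ (q s + 1)))) x := by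
  apply HasDerivAt.fun_sum
  intro s hs
  obtain ⟨E, hE⟩ : ∃ E, p s = E + 1 := ⟨p s - 1, by have := hp s hs; omega⟩
  obtain ⟨F, hF⟩ : ∃ F, q s = F + 1 := ⟨q s - 1, by have := hq s hs; omega⟩
  rw [hE, hF]
  have h := hderiv3 (c s) u w E F x hu hw
  exact_mod_cast h

lemma sumDeriv4 (c A : ℕ → ℂ) (q : ℕ → ℕ) (S : Finset ℕ) (w x : ℂ) (hw : x ≠ w)
    (hA : ∀ s ∈ S, A s ≠ 0) (hq : ∀ s ∈ S, 1 ≤ q s) :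
    HasDerivAt (fun t => ∑ s ∈ S, c s / ((t - w) ^ (q s) * A s))
      (∑ s ∈ S, -((q s : ℂ) * c s / ((x - w) ^ (q s + 1) * A s))) x := by
  apply HasDerivAt.fun_sum
  intro s hs
  obtain ⟨F, hF⟩ : ∃ F, q s = F + 1 := ⟨q s - 1, by have := hq s hs; omega⟩
  rw [hF]
  have h := hderiv4 (c s) (A s) w F x hw (hA s hs)
  exact_mod_cast h

/-- peel bottom element of an Icc sum -/
lemma Icc_bot_peel {a b : ℕ} (h : a ≤ b) (f : ℕ → ℂ) :
    ∑ s ∈ Icc a b, f s = f a + ∑ s ∈ Icc (a+1) b, f s := by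
  rw [Finset.Icc_eq_cons_Ioc h, Finset.sum_cons, ← Finset.Icc_add_one_left_eq_Ioc]

/-- shift reindex -/
lemma Icc_shift (a b : ℕ) (f g : ℕ → ℂ) (h : ∀ s, a ≤ s → s ≤ b → f s = g (s+1)) :
    ∑ s ∈ Icc a b, f s = ∑ s ∈ Icc (a+1) (b+1), g s := by
  refine Finset.sum_nbij' (fun s => s + 1) (fun s => s - 1) ?_ ?_ ?_ ?_ ?_ <;>
    simp only [mem_Icc] <;> intro s hs
  · omega
  · omega
  · omega
  · omega
  · exact h s hs.1 hs.2

/-- reflection reindex on symmetric Icc -/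
lemma Icc_reflect (a b : ℕ) (f : ℕ → ℂ) :
    ∑ s ∈ Icc a b, f s = ∑ s ∈ Icc a b, f (a + b - s) := by
  refine Finset.sum_nbij' (fun s => a + b - s) (fun s => a + b - s) ?_ ?_ ?_ ?_ ?_ <;>
    simp only [mem_Icc] <;> intro s hs
  · omega
  · omega
  · omega
  · omega
  · exact congrArg f (by omega)

end St4

section ALB
open Finset
namespace St4

lemma ALB1 (y z x : ℂ) (k l : ℕ) (hk : 1 ≤ k) (hl : 1 ≤ l) :
    (k : ℂ) * T1 y z x (k+1) l
      = ∑ s ∈ Icc 1 (k+1),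
          ((l+k+1-s : ℕ) * (((k+l-s).choose (k+1-s) : ℂ) * (-1)^(l+s) * ((2*k+1-s : ℕ) : ℂ)) /
              ((z - y) ^ ((l+k+1-s) + 1) * (y - x) ^ s)
            - (s : ℂ) * (((k+l-s).choose (k+1-s) : ℂ) * (-1)^(l+s) * ((2*k+1-s : ℕ) : ℂ)) /
              ((z - y) ^ (l+k+1-s) * (y - x) ^ (s + 1))) := by
  set A : ℕ → ℂ := fun s =>
      ((l+k+1-s : ℕ) * (((k+l-s).choose (k+1-s) : ℂ) * (-1)^(l+s) * ((2*k+1-s : ℕ) : ℂ)) /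
        ((z - y) ^ ((l+k+1-s) + 1) * (y - x) ^ s)) with hA
  set B : ℕ → ℂ := fun s =>
      ((s : ℂ) * (((k+l-s).choose (k+1-s) : ℂ) * (-1)^(l+s) * ((2*k+1-s : ℕ) : ℂ)) /
        ((z - y) ^ (l+k+1-s) * (y - x) ^ (s + 1))) with hB
  set g : ℕ → ℂ := fun σ =>
      (((σ-1 : ℕ) : ℂ) * (((k+l-(σ-1)).choose (k+1-(σ-1)) : ℂ) * (-1)^(l+(σ-1)) *
          ((2*k+1-(σ-1) : ℕ) : ℂ)) /
        ((z - y) ^ (l+k+1-(σ-1)) * (y - x) ^ ((σ-1) + 1))) with hg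
  set t : ℕ → ℂ := fun s =>
      (((k+1)+l-s).choose ((k+1)+1-s) : ℂ) * (-1)^(l+s) * ((2*(k+1)+1-s : ℕ) : ℂ) /
        ((z - y) ^ (l+(k+1)+1-s) * (y - x) ^ s) with ht
  have hBg : ∑ s ∈ Icc 1 (k+1), B s = ∑ σ ∈ Icc 2 (k+2), g σ :=
    Icc_shift 1 (k+1) B g (fun s _ _ => rfl)
  have hg1 : g 1 = 0 := by simp [hg]
  have hpeel : ∑ σ ∈ Icc 1 (k+2), g σ = g 1 + ∑ σ ∈ Icc 2 (k+2), g σ :=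
    Icc_bot_peel (by omega) g
  -- boundary identity
  have hbdry : (k : ℂ) * t (k+2) + g (k+2) = 0 := by
    obtain ⟨L, rfl⟩ : ∃ L, l = L + 1 := ⟨l - 1, by omega⟩
    simp only [ht, hg]
    rw [show (k+1)+(L+1)-(k+2) = L from by omega,
        show (k+1)+1-(k+2) = 0 from by omega,
        show 2*(k+1)+1-(k+2) = k+1 from by omega,
        show (L+1)+(k+1)+1-(k+2) = L+1 from by omega,
        show (k+2)-1 = k+1 from by omega,
        show k+(L+1)-(k+1) = L from by omega,
        show k+1-(k+1) = 0 from by omega,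
        show 2*k+1-(k+1) = k from by omega,
        show (L+1)+k+1-(k+1) = L+1 from by omega,
        show (L+1)+(k+2) = (L+1+k)+2 from by omega,
        show (L+1)+(k+1) = (L+1+k)+1 from by omega]
    rw [pow_add, pow_add, Nat.choose_zero_right]
    push_cast
    ring
  -- interior identity
  have hint : ∀ σ ∈ Icc 1 (k+1), (k : ℂ) * t σ + g σ = A σ := by
    intro σ hσ
    simp only [mem_Icc] at hσ
    obtain ⟨S, rfl⟩ : ∃ S, σ = S + 1 := ⟨σ - 1, by omega⟩
    obtain ⟨a, rfl⟩ : ∃ a, k = S + a := ⟨k - S, by omega⟩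
    obtain ⟨L, rfl⟩ : ∃ L, l = L + 1 := ⟨l - 1, by omega⟩
    have hcN := Nat.add_one_mul_choose_eq (a + L) a
    have hC : ((a : ℂ) + L + 1) * ((a+L).choose a : ℂ)
        = ((a+L+1).choose (a+1) : ℂ) * ((a : ℂ) + 1) := by
      exact_mod_cast hcN
    simp only [ht, hg, hA]
    rw [show (S+a+1)+(L+1)-(S+1) = a+L+1 from by omega,
        show (S+a+1)+1-(S+1) = a+1 from by omega,
        show 2*(S+a+1)+1-(S+1) = S+2*a+2 from by omega,
        show (L+1)+(S+a+1)+1-(S+1) = L+a+2 from by omega,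
        show (S+1)-1 = S from by omega,
        show (S+a)+(L+1)-S = a+L+1 from by omega,
        show (S+a)+1-S = a+1 from by omega,
        show 2*(S+a)+1-S = S+2*a+1 from by omega,
        show (L+1)+(S+a)+1-S = L+a+2 from by omega,
        show (L+1)+(S+a)+1-(S+1) = L+a+1 from by omega,
        show (S+a)+(L+1)-(S+1) = a+L from by omega,
        show (S+a)+1-(S+1) = a from by omega,
        show 2*(S+a)+1-(S+1) = S+2*a from by omega,
        show (L+1)+(S+1) = (L+S)+2 from by omega,
        show (L+1)+S = (L+S)+1 from by omega]
    rw [show ((-1 : ℂ))^((L+S)+2) = (-1)^(L+S) from by rw [pow_add]; norm_num,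
        show ((-1 : ℂ))^((L+S)+1) = -(-1)^(L+S) from by rw [pow_add]; norm_num]
    push_cast
    linear_combination -((-1 : ℂ))^(L+S) * ((S : ℂ)+2*a) /
      ((z - y)^(L+a+2) * (y - x)^(S+1)) * hC
  -- assemble
  have key : ∑ s ∈ Icc 1 (k+2), ((k : ℂ) * t s + g s) = ∑ s ∈ Icc 1 (k+1), A s := by
    rw [Finset.sum_Icc_succ_top (show 1 ≤ k+2 from by omega)]
    rw [hbdry, add_zero]
    exact Finset.sum_congr rfl hint
  have hT : (k : ℂ) * T1 y z x (k+1) l = ∑ s ∈ Icc 1 (k+2), (k : ℂ) * t s := by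
    rw [T1, Finset.mul_sum]
  rw [hT]
  have h2 : ∑ s ∈ Icc 1 (k+2), (k : ℂ) * t s
      = (∑ s ∈ Icc 1 (k+2), ((k : ℂ) * t s + g s)) - ∑ s ∈ Icc 1 (k+2), g s := by
    rw [Finset.sum_add_distrib]; ring
  rw [h2, key, hpeel, hg1, ← hBg, Finset.sum_sub_distrib]
  ring

end St4
end ALB

section BSIDE
open Finset
namespace St4

lemma ALB2 (y z x : ℂ) (k l : ℕ) (hk : 1 ≤ k) (hl : 1 ≤ l) :
    (k : ℂ) * T1 z y x l (k+1)
      = ∑ s ∈ Icc 1 (l+1),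
          -(((k+l+1-s : ℕ) : ℂ) * (((l+k-s).choose (l+1-s) : ℂ) * (-1)^(k+s) * ((2*l+1-s : ℕ) : ℂ)) /
              ((y - z) ^ ((k+l+1-s) + 1) * (z - x) ^ s)) := by
  rw [T1, Finset.mul_sum]
  refine Finset.sum_congr rfl fun s hs => ?_
  simp only [mem_Icc] at hs
  obtain ⟨S, rfl⟩ : ∃ S, s = S + 1 := ⟨s - 1, by omega⟩
  obtain ⟨b, rfl⟩ : ∃ b, l = S + b := ⟨l - S, by omega⟩
  obtain ⟨K, rfl⟩ : ∃ K, k = K + 1 := ⟨k - 1, by omega⟩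
  have hcN := Nat.choose_mul_succ_eq (K + b) b
  have hC : ((K+b).choose b : ℂ) * ((K : ℂ) + b + 1) = ((K+b+1).choose b : ℂ) * ((K : ℂ) + 1) := by
    have : (K+b).choose b * (K+b+1) = (K+b+1).choose b * (K+1) := by
      have h2 := hcN
      rwa [show K + b + 1 - b = K + 1 from by omega] at h2
    exact_mod_cast this
  rw [show (S+b)+(K+1)-(S+1) = K+b from by omega,
      show (S+b)+1-(S+1) = b from by omega,
      show 2*(S+b)+1-(S+1) = S+2*b from by omega,
      show (K+1)+(S+b)+1-(S+1) = K+b+1 from by omega,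
      show (S+b)+(K+1+1)-(S+1) = K+b+1 from by omega,
      show (K+1)+1+(S+b)+1-(S+1) = K+b+2 from by omega,
      show (K+1)+1+(S+1) = (K+S)+3 from by omega,
      show (K+1)+(S+1) = (K+S)+2 from by omega]
  rw [show ((-1 : ℂ))^((K+S)+3) = -(-1)^(K+S) from by rw [pow_add]; norm_num,
      show ((-1 : ℂ))^((K+S)+2) = (-1)^(K+S) from by rw [pow_add]; norm_num]
  push_cast
  linear_combination ((-1 : ℂ))^(K+S) * ((S : ℂ) + 2*b) /
    ((y - z)^(K+b+2) * (z - x)^(S+1)) * hC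

lemma RBderiv (z x : ℂ) (k l : ℕ) (hk : 1 ≤ k) (y : ℂ) (hyx : y ≠ x) (hzx : z ≠ x) :
    HasDerivAt (fun t => RB t z x k l) ((k : ℂ) * RB y z x (k+1) l) y := by
  obtain ⟨K, rfl⟩ : ∃ K, k = K + 1 := ⟨k - 1, by omega⟩
  have hA1 : ((z - x) ^ (l+1) : ℂ) ≠ 0 := pow_ne_zero _ (sub_ne_zero.mpr hzx)
  have hA2 : ((z - x) ^ l : ℂ) ≠ 0 := pow_ne_zero _ (sub_ne_zero.mpr hzx)
  have h1 := hderiv4 ((-1 : ℂ)^(K+1+l) * (l : ℂ)) ((z - x)^(l+1)) x K y hyx hA1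
  have h2 := hderiv4 ((-1 : ℂ)^(K+1+l) * ((K+1 : ℕ) : ℂ)) ((z - x)^l) x (K+1) y hyx hA2
  have h := h1.sub h2
  have heq : (fun t => RB t z x (K+1) l)
      = (fun t => (-1 : ℂ)^(K+1+l) * (l : ℂ) / ((t - x) ^ (K+1) * (z - x)^(l+1))
          - (-1 : ℂ)^(K+1+l) * ((K+1 : ℕ) : ℂ) / ((t - x) ^ (K+1+1) * (z - x)^l)) := by
    funext t
    unfold RB
    push_cast
    ring
  rw [heq]
  refine h.congr_deriv ?_
  unfold RB
  rw [show K+1+1+l = (K+1+l)+1 from by omega, pow_succ]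
  push_cast
  ring

lemma Bstep (x z : ℂ) (k l : ℕ) (hk : 1 ≤ k) (hl : 1 ≤ l) (hzx : z ≠ x)
    (h : ∀ y : ℂ, y ≠ x → y ≠ z → T1 y z x k l - T1 z y x l k = RB y z x k l) :
    ∀ y : ℂ, y ≠ x → y ≠ z → T1 y z x (k+1) l - T1 z y x l (k+1) = RB y z x (k+1) l := by
  intro y hyx hyz
  have hD1 : HasDerivAt (fun t => T1 t z x k l)
      (∑ s ∈ Icc 1 (k+1),
        (((l+k+1-s : ℕ) : ℂ) * (((k+l-s).choose (k+1-s) : ℂ) * (-1)^(l+s) * ((2*k+1-s : ℕ) : ℂ)) /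
            ((z - y) ^ ((l+k+1-s) + 1) * (y - x) ^ s)
          - (s : ℂ) * (((k+l-s).choose (k+1-s) : ℂ) * (-1)^(l+s) * ((2*k+1-s : ℕ) : ℂ)) /
            ((z - y) ^ (l+k+1-s) * (y - x) ^ (s + 1)))) y := by
    simp only [T1]
    exact sumDeriv3 (fun s => ((k+l-s).choose (k+1-s) : ℂ) * (-1)^(l+s) * ((2*k+1-s : ℕ) : ℂ))
      (fun s => l+k+1-s) (fun s => s) (Icc 1 (k+1)) z x y (Ne.symm hyz) hyx
      (fun s hs => by simp only [mem_Icc] at hs; show 1 ≤ l+k+1-s; omega)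
      (fun s hs => by simp only [mem_Icc] at hs; show 1 ≤ s; omega)
  have hD2 : HasDerivAt (fun t => T1 z t x l k)
      (∑ s ∈ Icc 1 (l+1),
        -(((k+l+1-s : ℕ) : ℂ) * (((l+k-s).choose (l+1-s) : ℂ) * (-1)^(k+s) * ((2*l+1-s : ℕ) : ℂ)) /
            ((y - z) ^ ((k+l+1-s) + 1) * (z - x) ^ s))) y := by
    simp only [T1]
    exact sumDeriv4 (fun s => ((l+k-s).choose (l+1-s) : ℂ) * (-1)^(k+s) * ((2*l+1-s : ℕ) : ℂ))
      (fun s => (z - x) ^ s) (fun s => k+l+1-s) (Icc 1 (l+1)) z y hyz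
      (fun s _ => pow_ne_zero _ (sub_ne_zero.mpr hzx))
      (fun s hs => by simp only [mem_Icc] at hs; show 1 ≤ k+l+1-s; omega)
  have hD3 := RBderiv z x k l hk y hyx hzx
  have hF := (hD1.sub hD2).sub hD3
  have hopen : IsOpen ({t : ℂ | t ≠ x} ∩ {t : ℂ | t ≠ z}) := isOpen_ne.inter isOpen_ne
  have hzero : (fun _ : ℂ => (0 : ℂ)) =ᶠ[nhds y]
      (fun t => T1 t z x k l - T1 z t x l k - RB t z x k l) := by
    filter_upwards [hopen.mem_nhds ⟨hyx, hyz⟩] with t ht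
    rw [h t ht.1 ht.2, sub_self]
  have hF0 := hF.congr_of_eventuallyEq hzero
  have hd0 := hF0.unique (hasDerivAt_const y 0)
  have hA1 := ALB1 y z x k l hk hl
  have hA2 := ALB2 y z x k l hk hl
  have hkne : (k : ℂ) ≠ 0 := Nat.cast_ne_zero.mpr (by omega)
  apply mul_left_cancel₀ hkne
  rw [mul_sub, hA1, hA2]
  linear_combination hd0

lemma Bbase (x y z : ℂ) (hxy : x ≠ y) (hyz : y ≠ z) (hxz : x ≠ z) :
    T1 y z x 1 1 - T1 z y x 1 1 = RB y z x 1 1 := by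
  have h1 : (y - x) ≠ 0 := sub_ne_zero.mpr (Ne.symm hxy)
  have h2 : (z - y) ≠ 0 := sub_ne_zero.mpr (Ne.symm hyz)
  have h3 : (z - x) ≠ 0 := sub_ne_zero.mpr (Ne.symm hxz)
  have h4 : (y - z) ≠ 0 := sub_ne_zero.mpr hyz
  rw [T1, T1, RB]
  rw [show Icc 1 (1+1) = {1, 2} from rfl]
  rw [Finset.sum_insert (by decide), Finset.sum_singleton,
      Finset.sum_insert (by decide), Finset.sum_singleton]
  norm_num
  field_simp
  ring

lemma Bident : ∀ n k l : ℕ, k + l = n → 1 ≤ k → 1 ≤ l → ∀ x y z : ℂ,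
    x ≠ y → y ≠ z → x ≠ z → T1 y z x k l - T1 z y x l k = RB y z x k l := by
  intro n
  induction n using Nat.strong_induction_on with
  | _ n ih =>
    intro k l hn hk hl x y z hxy hyz hxz
    by_cases hk2 : 2 ≤ k
    · obtain ⟨k', rfl⟩ : ∃ k', k = k' + 1 := ⟨k - 1, by omega⟩
      have prev : ∀ y' : ℂ, y' ≠ x → y' ≠ z →
          T1 y' z x k' l - T1 z y' x l k' = RB y' z x k' l := by
        intro y' hy1 hy2
        exact ih (k' + l) (by omega) k' l rfl (by omega) hl x y' z (Ne.symm hy1) hy2 hxz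
      exact Bstep x z k' l (by omega) hl (Ne.symm hxz) prev y (Ne.symm hxy) hyz
    · by_cases hl2 : 2 ≤ l
      · have hk1 : k = 1 := by omega
        subst hk1
        obtain ⟨l', rfl⟩ : ∃ l', l = l' + 1 := ⟨l - 1, by omega⟩
        have prev : ∀ y' : ℂ, y' ≠ x → y' ≠ y →
            T1 y' y x l' 1 - T1 y y' x 1 l' = RB y' y x l' 1 := by
          intro y' hy1 hy2
          exact ih (l' + 1) (by omega) l' 1 rfl (by omega) le_rfl x y' y (Ne.symm hy1) hy2 hxy
        have hswap := Bstep x y l' 1 (by omega) le_rfl (Ne.symm hxy) prev z (Ne.symm hxz)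
          (Ne.symm hyz)
        have hRB : RB z y x (l'+1) 1 = -RB y z x 1 (l'+1) := by
          unfold RB
          rw [show (l'+1)+1 = 1+(l'+1) from by omega]
          ring
        linear_combination -hswap - hRB
      · have hk1 : k = 1 := by omega
        have hl1 : l = 1 := by omega
        subst hk1; subst hl1
        exact Bbase x y z hxy hyz hxz

end St4
end BSIDE

section RSIDE
open Finset
namespace St4

lemma S3_reflect (y z x : ℂ) (m k l r : ℕ) (hr1 : 1 ≤ r) (hr2 : r ≤ m + 1) :
    S3 y z x m k l r = ∑ s ∈ Icc (r-1) (m+1),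
      ((k+s-r).choose (s+1-r) : ℂ) * ((m+l-s).choose (m+1-s) : ℂ) * (-1)^(k+l) *
        ((m+s+1-r : ℕ) : ℂ) * ((2*m+r+1-2*s : ℕ) : ℂ) /
        ((y-x)^(k+s+1-r) * (z-x)^(l+m+1-s)) := by
  rw [S3, Icc_reflect (r-1) (m+1)]
  refine Finset.sum_congr rfl fun s hs => ?_
  simp only [mem_Icc] at hs
  rw [show (r-1) + (m+1) - s = m+r-s from by omega,
      show m+k-(m+r-s) = k+s-r from by omega,
      show m+1-(m+r-s) = s+1-r from by omega,
      show (m+r-s)+l-r = m+l-s from by omega,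
      show (m+r-s)+1-r = m+1-s from by omega,
      show 2*m+1-(m+r-s) = m+s+1-r from by omega,
      show 2*(m+r-s)+1-r = 2*m+r+1-2*s from by omega,
      show k+m+1-(m+r-s) = k+s+1-r from by omega,
      show l+(m+r-s)+1-r = l+m+1-s from by omega]

lemma S1_scale (y z x : ℂ) (m k l r : ℕ) (hr1 : 1 ≤ r) (hrm : r ≤ m) :
    ((2*m-r : ℕ) : ℂ) * ((m+1-r : ℕ) : ℂ) * S1 y z x m k l r
      = ((2*m+1-r : ℕ) : ℂ) * ∑ s ∈ Icc 1 (k+1),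
          ((m+s+1-(r+1) : ℕ) : ℂ) *
            (((k+l-s).choose (k+1-s) : ℂ) * ((m+s-(r+1)).choose (m+1-(r+1)) : ℂ) *
              (-1)^(l+s) * ((2*k+1-s : ℕ) : ℂ) * ((2*m+1-(r+1) : ℕ) : ℂ)) /
            ((z-y)^(l+k+1-s) * (y-x)^(m+s+1-(r+1)+1)) := by
  rw [S1, Finset.mul_sum, Finset.mul_sum]
  refine Finset.sum_congr rfl fun s hs => ?_
  simp only [mem_Icc] at hs
  obtain ⟨S, rfl⟩ : ∃ S, s = S + 1 := ⟨s - 1, by omega⟩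
  obtain ⟨a, rfl⟩ : ∃ a, m = r + a := ⟨m - r, by omega⟩
  have hcN := Nat.add_one_mul_choose_eq (a + S) a
  have hC : ((a : ℂ) + S + 1) * ((a+S).choose a : ℂ)
      = ((a+S+1).choose (a+1) : ℂ) * ((a : ℂ) + 1) := by exact_mod_cast hcN
  rw [show (r+a)+(S+1)-r = a+S+1 from by omega,
      show (r+a)+1-r = a+1 from by omega,
      show 2*(r+a)+1-r = r+2*a+1 from by omega,
      show (r+a)+(S+1)+1-r = a+S+2 from by omega,
      show (r+a)+(S+1)+1-(r+1) = a+S+1 from by omega,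
      show (r+a)+(S+1)-(r+1) = a+S from by omega,
      show (r+a)+1-(r+1) = a from by omega,
      show 2*(r+a)+1-(r+1) = r+2*a from by omega,
      show 2*(r+a)-r = r+2*a from by omega]
  push_cast
  linear_combination -((r : ℂ)+2*a) * ((r : ℂ)+2*a+1) * ((k+l-(S+1)).choose (k-S) : ℂ) *
    (-1)^(l+(S+1)) * ((2*k-S : ℕ) : ℂ) / ((z-y)^(l+k-S) * (y-x)^(a+S+2)) * hC

lemma S1_top (y z x : ℂ) (m k l : ℕ) :
    S1 y z x m k l (m+1) = (m : ℂ) * T1 y z x k l := by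
  rw [S1, T1, Finset.mul_sum]
  refine Finset.sum_congr rfl fun s hs => ?_
  simp only [mem_Icc] at hs
  rw [show m+s-(m+1) = s-1 from by omega,
      show m+1-(m+1) = 0 from by omega,
      show 2*m+1-(m+1) = m from by omega,
      show m+s+1-(m+1) = s from by omega,
      Nat.choose_zero_right]
  push_cast
  ring

lemma S3_top (y z x : ℂ) (m k l : ℕ) (hm : 1 ≤ m) (hk : 1 ≤ k) (hl : 1 ≤ l) :
    S3 y z x m k l (m+1) = (m : ℂ) * ((-1)^(k+l) *
      ((k : ℂ) * ((m : ℂ)+1) / ((y-x)^(k+1) * (z-x)^l)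
        + (l : ℂ) * ((m : ℂ)+2) / ((y-x)^k * (z-x)^(l+1)))) := by
  rw [S3]
  rw [show (m+1)-1 = m from by omega]
  rw [Finset.sum_Icc_succ_top (show m ≤ m+1 from by omega), Finset.Icc_self,
      Finset.sum_singleton]
  rw [show m+k-m = k from by omega,
      show m+1-m = 1 from by omega,
      show m+l-(m+1) = l-1 from by omega,
      show m+1-(m+1) = 0 from by omega,
      show 2*m+1-m = m+1 from by omega,
      show 2*m+1-(m+1) = m from by omega,
      show k+m+1-m = k+1 from by omega,
      show l+m+1-(m+1) = l from by omega,
      show m+k-(m+1) = k-1 from by omega,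
      show (m+1)+l-(m+1) = l from by omega,
      show (m+1)+1-(m+1) = 1 from by omega,
      show 2*(m+1)+1-(m+1) = m+2 from by omega,
      show k+m+1-(m+1) = k from by omega,
      show l+(m+1)+1-(m+1) = l+1 from by omega,
      Nat.choose_one_right, Nat.choose_one_right,
      Nat.choose_zero_right, Nat.choose_zero_right]
  push_cast
  ring

end St4
end RSIDE

section S34
open Finset
namespace St4

lemma e2term (y z x : ℂ) (m k l r s : ℕ) (hr1 : 1 ≤ r) (hk : 1 ≤ k) (hl : 1 ≤ l)
    (hrs : r ≤ s) (hsm : s ≤ m) :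
    ((2*m-r : ℕ) : ℂ) * ((m+1-r : ℕ) : ℂ) * ((((m+k-(s)).choose (m+1-(s)) : ℂ) * (((s)+l-r).choose ((s)+1-r) : ℂ) * (-1)^(k+l) * ((2*m+1-(s) : ℕ) : ℂ) * ((2*(s)+1-r : ℕ) : ℂ) / ((y-x)^(k+m+1-(s)) * (z-x)^(l+(s)+1-r))) - (((l+(s)-r).choose ((s)+1-r) : ℂ) * ((m+k-(s)).choose (m+1-(s)) : ℂ) * (-1)^(l+k) * ((m+(s)+1-r : ℕ) : ℂ) * ((2*m+r+1-2*(s) : ℕ) : ℂ) / ((z-x)^(l+(s)+1-r) * (y-x)^(k+m+1-(s)))))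
      = ((2*m+1-r : ℕ) : ℂ) * ((((k+m+1-(s+1) : ℕ) : ℂ) * (((m+k-(s+1)).choose (m+1-(s+1)) : ℂ) * (((s+1)+l-(r+1)).choose ((s+1)+1-(r+1)) : ℂ) * (-1)^(k+l) * ((2*m+1-(s+1) : ℕ) : ℂ) * ((2*(s+1)+1-(r+1) : ℕ) : ℂ)) / ((y-x)^(k+m+1-(s+1)+1) * (z-x)^(l+(s+1)+1-(r+1))) - (((k+m+1-(s+1) : ℕ) : ℂ) * (((l+(s+1)-(r+1)).choose ((s+1)+1-(r+1)) : ℂ) * ((m+k-(s+1)).choose (m+1-(s+1)) : ℂ) * (-1)^(l+k) * ((m+(s+1)+1-(r+1) : ℕ) : ℂ) * ((2*m+(r+1)+1-2*(s+1) : ℕ) : ℂ)) / ((z-x)^(l+(s+1)+1-(r+1)) * (y-x)^(k+m+1-(s+1)+1)))) + (((l+(s)+1-(r+1) : ℕ) : ℂ) * (((m+k-(s)).choose (m+1-(s)) : ℂ) * (((s)+l-(r+1)).choose ((s)+1-(r+1)) : ℂ) * (-1)^(k+l) * ((2*m+1-(s) : ℕ) : ℂ) * ((2*(s)+1-(r+1)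 : ℕ) : ℂ)) / ((y-x)^(k+m+1-(s)) * (z-x)^(l+(s)+1-(r+1)+1)) - (((l+(s)+1-(r+1) : ℕ) : ℂ) * (((l+(s)-(r+1)).choose ((s)+1-(r+1)) : ℂ) * ((m+k-(s)).choose (m+1-(s)) : ℂ) * (-1)^(l+k) * ((m+(s)+1-(r+1) : ℕ) : ℂ) * ((2*m+(r+1)+1-2*(s) : ℕ) : ℂ)) / ((z-x)^(l+(s)+1-(r+1)+1) * (y-x)^(k+m+1-(s)))))) := by
  obtain ⟨B, rfl⟩ : ∃ B, s = r + B := ⟨s - r, by omega⟩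
  obtain ⟨A, rfl⟩ : ∃ A, m = r + B + A := ⟨m - (r+B), by omega⟩
  obtain ⟨K, rfl⟩ : ∃ K, k = K + 1 := ⟨k - 1, by omega⟩
  obtain ⟨L, rfl⟩ : ∃ L, l = L + 1 := ⟨l - 1, by omega⟩
  have hCa : ((K : ℂ)+A+1) * ((K+A).choose A : ℂ)
      = ((K+A+1).choose (A+1) : ℂ) * ((A : ℂ)+1) := by
    exact_mod_cast Nat.add_one_mul_choose_eq (K+A) A
  have hCb : ((L : ℂ)+B+1) * ((L+B).choose B : ℂ)
      = ((L+B+1).choose (B+1) : ℂ) * ((B : ℂ)+1) := by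
    exact_mod_cast Nat.add_one_mul_choose_eq (L+B) B
  rw [show r+B+A+(K+1)-(r+B) = K+A+1 from by omega,
      show r+B+A+1-(r+B) = A+1 from by omega,
      show r+B+(L+1)-r = L+B+1 from by omega,
      show r+B+1-r = B+1 from by omega,
      show 2*(r+B+A)+1-(r+B) = r+B+2*A+1 from by omega,
      show 2*(r+B)+1-r = r+2*B+1 from by omega,
      show K+1+(r+B+A)+1-(r+B) = K+A+2 from by omega,
      show L+1+(r+B)+1-r = L+B+2 from by omega,
      show L+1+(r+B)-r = L+B+1 from by omega,
      show r+B+A+(r+B)+1-r = r+2*B+A+1 from by omega,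
      show 2*(r+B+A)+r+1-2*(r+B) = r+2*A+1 from by omega,
      show K+1+(r+B+A)+1-(r+B+1) = K+A+1 from by omega,
      show r+B+A+(K+1)-(r+B+1) = K+A from by omega,
      show r+B+A+1-(r+B+1) = A from by omega,
      show r+B+1+(L+1)-(r+1) = L+B+1 from by omega,
      show r+B+1+1-(r+1) = B+1 from by omega,
      show 2*(r+B+A)+1-(r+B+1) = r+B+2*A from by omega,
      show 2*(r+B+1)+1-(r+1) = r+2*B+2 from by omega,
      show L+1+(r+B+1)-(r+1) = L+B+1 from by omega,
      show r+B+A+(r+B+1)+1-(r+1) = r+2*B+A+1 from by omega,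
      show 2*(r+B+A)+(r+1)+1-2*(r+B+1) = r+2*A from by omega,
      show L+1+(r+B+1)+1-(r+1) = L+B+2 from by omega,
      show L+1+(r+B)+1-(r+1) = L+B+1 from by omega,
      show r+B+(L+1)-(r+1) = L+B from by omega,
      show r+B+1-(r+1) = B from by omega,
      show 2*(r+B)+1-(r+1) = r+2*B from by omega,
      show L+1+(r+B)-(r+1) = L+B from by omega,
      show r+B+A+(r+B)+1-(r+1) = r+2*B+A from by omega,
      show 2*(r+B+A)+(r+1)+1-2*(r+B) = r+2*A+2 from by omega,
      show 2*(r+B+A)-r = r+2*A+2*B from by omega,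
      show r+B+A+1-r = A+B+1 from by omega,
      show 2*(r+B+A)+1-r = r+2*A+2*B+1 from by omega,
      show L+1+(K+1) = K+1+(L+1) from by omega]
  push_cast
  linear_combination
    (-((r : ℂ)+2*A+2*B+1) * ((L+B+1).choose (B+1) : ℂ) *
      (((r : ℂ)+B+2*A)*((r : ℂ)+2*B+2) - ((r : ℂ)+2*B+A+1)*((r : ℂ)+2*A)) *
      (-1 : ℂ)^(K+1+(L+1)) / ((y-x)^(K+A+2) * (z-x)^(L+B+2))) * hCa
    + (-((r : ℂ)+2*A+2*B+1) * ((K+A+1).choose (A+1) : ℂ) *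
      (((r : ℂ)+B+2*A+1)*((r : ℂ)+2*B) - ((r : ℂ)+2*B+A)*((r : ℂ)+2*A+2)) *
      (-1 : ℂ)^(K+1+(L+1)) / ((y-x)^(K+A+2) * (z-x)^(L+B+2))) * hCb

lemma e1term (y z x : ℂ) (m k l r : ℕ) (hr1 : 1 ≤ r) (hrm : r ≤ m) (hk : 1 ≤ k) (hl : 1 ≤ l) :
    ((2*m-r : ℕ) : ℂ) * ((m+1-r : ℕ) : ℂ) * ((((m+k-(r-1)).choose (m+1-(r-1)) : ℂ) * (((r-1)+l-r).choose ((r-1)+1-r) : ℂ) * (-1)^(k+l) * ((2*m+1-(r-1) : ℕ) : ℂ) * ((2*(r-1)+1-r : ℕ) : ℂ) / ((y-x)^(k+m+1-(r-1)) * (z-x)^(l+(r-1)+1-r))) - (((l+(r-1)-r).choose ((r-1)+1-r) : ℂ) * ((m+k-(r-1)).choose (m+1-(r-1)) : ℂ) * (-1)^(l+k) * ((m+(r-1)+1-r : ℕ) : ℂ) * ((2*m+r+1-2*(r-1) : ℕ) : ℂ) / ((z-x)^(l+(r-1)+1-r) * (y-x)^(k+m+1-(r-1)))))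
      = ((2*m+1-r : ℕ) : ℂ) * (((k+m+1-(r-1+1) : ℕ) : ℂ) * (((m+k-(r-1+1)).choose (m+1-(r-1+1)) : ℂ) * (((r-1+1)+l-(r+1)).choose ((r-1+1)+1-(r+1)) : ℂ) * (-1)^(k+l) * ((2*m+1-(r-1+1) : ℕ) : ℂ) * ((2*(r-1+1)+1-(r+1) : ℕ) : ℂ)) / ((y-x)^(k+m+1-(r-1+1)+1) * (z-x)^(l+(r-1+1)+1-(r+1))) - (((k+m+1-(r-1+1) : ℕ) : ℂ) * (((l+(r-1+1)-(r+1)).choose ((r-1+1)+1-(r+1)) : ℂ) * ((m+k-(r-1+1)).choose (m+1-(r-1+1)) : ℂ) * (-1)^(l+k) * ((m+(r-1+1)+1-(r+1) : ℕ) : ℂ) * ((2*m+(r+1)+1-2*(r-1+1) : ℕ) : ℂ)) / ((z-x)^(l+(r-1+1)+1-(r+1)) * (y-x)^(k+m+1-(r-1+1)+1)))) := by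
  obtain ⟨R, rfl⟩ : ∃ R, r = R + 1 := ⟨r - 1, by omega⟩
  obtain ⟨Bm, rfl⟩ : ∃ Bm, m = R + 1 + Bm := ⟨m - (R+1), by omega⟩
  obtain ⟨K, rfl⟩ : ∃ K, k = K + 1 := ⟨k - 1, by omega⟩
  obtain ⟨L, rfl⟩ : ∃ L, l = L + 1 := ⟨l - 1, by omega⟩
  simp only [Nat.add_sub_cancel]
  have hC : ((K : ℂ)+Bm+2) * ((K+Bm+1).choose (Bm+1) : ℂ)
      = ((K+Bm+2).choose (Bm+2) : ℂ) * ((Bm : ℂ)+2) := by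
    exact_mod_cast Nat.add_one_mul_choose_eq (K+Bm+1) (Bm+1)
  rw [show R+1+Bm+(K+1)-R = K+Bm+2 from by omega,
      show R+1+Bm+1-R = Bm+2 from by omega,
      show R+(L+1)-(R+1) = L from by omega,
      show R+1-(R+1) = 0 from by omega,
      show 2*(R+1+Bm)+1-R = R+2*Bm+3 from by omega,
      show 2*R+1-(R+1) = R from by omega,
      show K+1+(R+1+Bm)+1-R = K+Bm+3 from by omega,
      show L+1+R+1-(R+1) = L+1 from by omega,
      show L+1+R-(R+1) = L from by omega,
      show R+1+Bm+R+1-(R+1) = R+Bm+1 from by omega,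
      show 2*(R+1+Bm)+(R+1)+1-2*R = R+2*Bm+4 from by omega,
      show K+1+(R+1+Bm)+1-(R+1) = K+Bm+2 from by omega,
      show R+1+Bm+(K+1)-(R+1) = K+Bm+1 from by omega,
      show R+1+Bm+1-(R+1) = Bm+1 from by omega,
      show R+1+(L+1)-(R+1+1) = L from by omega,
      show R+1+1-(R+1+1) = 0 from by omega,
      show 2*(R+1+Bm)+1-(R+1) = R+2*Bm+2 from by omega,
      show 2*(R+1)+1-(R+1+1) = R+1 from by omega,
      show L+1+(R+1)-(R+1+1) = L from by omega,
      show R+1+Bm+(R+1)+1-(R+1+1) = R+Bm+1 from by omega,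
      show 2*(R+1+Bm)+(R+1+1)+1-2*(R+1) = R+2*Bm+3 from by omega,
      show L+1+(R+1)+1-(R+1+1) = L+1 from by omega,
      show 2*(R+1+Bm)-(R+1) = R+2*Bm+1 from by omega,
      show L+1+(K+1) = K+1+(L+1) from by omega]
  push_cast
  linear_combination
    (-((R : ℂ)+2*Bm+2) * ((L).choose 0 : ℂ) *
      (((R : ℂ)+1)*((R : ℂ)+2*Bm+2) - ((R : ℂ)+Bm+1)*((R : ℂ)+2*Bm+3)) *
      (-1 : ℂ)^(K+1+(L+1)) / ((y-x)^(K+Bm+3) * (z-x)^(L+1))) * hC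

lemma e3term (y z x : ℂ) (m k l r : ℕ) (hr1 : 1 ≤ r) (hrm : r ≤ m) (hk : 1 ≤ k) (hl : 1 ≤ l) :
    ((2*m-r : ℕ) : ℂ) * ((m+1-r : ℕ) : ℂ) * ((((m+k-(m+1)).choose (m+1-(m+1)) : ℂ) * (((m+1)+l-r).choose ((m+1)+1-r) : ℂ) * (-1)^(k+l) * ((2*m+1-(m+1) : ℕ) : ℂ) * ((2*(m+1)+1-r : ℕ) : ℂ) / ((y-x)^(k+m+1-(m+1)) * (z-x)^(l+(m+1)+1-r))) - (((l+(m+1)-r).choose ((m+1)+1-r) : ℂ) * ((m+k-(m+1)).choose (m+1-(m+1)) : ℂ) * (-1)^(l+k) * ((m+(m+1)+1-r : ℕ) : ℂ) * ((2*m+r+1-2*(m+1) : ℕ) : ℂ) / ((z-x)^(l+(m+1)+1-r) * (y-x)^(k+m+1-(m+1)))))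
      = ((2*m+1-r : ℕ) : ℂ) * (((l+(m+1)+1-(r+1) : ℕ) : ℂ) * (((m+k-(m+1)).choose (m+1-(m+1)) : ℂ) * (((m+1)+l-(r+1)).choose ((m+1)+1-(r+1)) : ℂ) * (-1)^(k+l) * ((2*m+1-(m+1) : ℕ) : ℂ) * ((2*(m+1)+1-(r+1) : ℕ) : ℂ)) / ((y-x)^(k+m+1-(m+1)) * (z-x)^(l+(m+1)+1-(r+1)+1)) - (((l+(m+1)+1-(r+1) : ℕ) : ℂ) * (((l+(m+1)-(r+1)).choose ((m+1)+1-(r+1)) : ℂ) * ((m+k-(m+1)).choose (m+1-(m+1)) : ℂ) * (-1)^(l+k) * ((m+(m+1)+1-(r+1) : ℕ) : ℂ) * ((2*m+(r+1)+1-2*(m+1) : ℕ) : ℂ)) / ((z-x)^(l+(m+1)+1-(r+1)+1) * (y-x)^(k+m+1-(m+1))))) := by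
  obtain ⟨R, rfl⟩ : ∃ R, r = R + 1 := ⟨r - 1, by omega⟩
  obtain ⟨Bm, rfl⟩ : ∃ Bm, m = R + 1 + Bm := ⟨m - (R+1), by omega⟩
  obtain ⟨K, rfl⟩ : ∃ K, k = K + 1 := ⟨k - 1, by omega⟩
  obtain ⟨L, rfl⟩ : ∃ L, l = L + 1 := ⟨l - 1, by omega⟩
  have hC : ((L : ℂ)+Bm+2) * ((L+Bm+1).choose (Bm+1) : ℂ)
      = ((L+Bm+2).choose (Bm+2) : ℂ) * ((Bm : ℂ)+2) := by
    exact_mod_cast Nat.add_one_mul_choose_eq (L+Bm+1) (Bm+1)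
  rw [show R+1+Bm+(K+1)-(R+1+Bm+1) = K from by omega,
      show R+1+Bm+1-(R+1+Bm+1) = 0 from by omega,
      show R+1+Bm+1+(L+1)-(R+1) = L+Bm+2 from by omega,
      show R+1+Bm+1+1-(R+1) = Bm+2 from by omega,
      show 2*(R+1+Bm)+1-(R+1+Bm+1) = R+Bm+1 from by omega,
      show 2*(R+1+Bm+1)+1-(R+1) = R+2*Bm+4 from by omega,
      show K+1+(R+1+Bm)+1-(R+1+Bm+1) = K+1 from by omega,
      show L+1+(R+1+Bm+1)+1-(R+1) = L+Bm+3 from by omega,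
      show L+1+(R+1+Bm+1)-(R+1) = L+Bm+2 from by omega,
      show R+1+Bm+(R+1+Bm+1)+1-(R+1) = R+2*Bm+3 from by omega,
      show 2*(R+1+Bm)+(R+1)+1-2*(R+1+Bm+1) = R from by omega,
      show L+1+(R+1+Bm+1)+1-(R+1+1) = L+Bm+2 from by omega,
      show R+1+Bm+1+(L+1)-(R+1+1) = L+Bm+1 from by omega,
      show R+1+Bm+1+1-(R+1+1) = Bm+1 from by omega,
      show 2*(R+1+Bm+1)+1-(R+1+1) = R+2*Bm+3 from by omega,
      show L+1+(R+1+Bm+1)-(R+1+1) = L+Bm+1 from by omega,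
      show R+1+Bm+(R+1+Bm+1)+1-(R+1+1) = R+2*Bm+2 from by omega,
      show 2*(R+1+Bm)+(R+1+1)+1-2*(R+1+Bm+1) = R+1 from by omega,
      show 2*(R+1+Bm)-(R+1) = R+2*Bm+1 from by omega,
      show R+1+Bm+1-(R+1) = Bm+1 from by omega,
      show 2*(R+1+Bm)+1-(R+1) = R+2*Bm+2 from by omega,
      show L+1+(K+1) = K+1+(L+1) from by omega]
  push_cast
  linear_combination
    (((R : ℂ)+2*Bm+2) * ((K).choose 0 : ℂ) *
      (((R : ℂ)+1)*((R : ℂ)+2*Bm+2) - ((R : ℂ)+Bm+1)*((R : ℂ)+2*Bm+3)) *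
      (-1 : ℂ)^(K+1+(L+1)) / ((y-x)^(K+1) * (z-x)^(L+Bm+3))) * hC

end St4
end S34

section FINAL
open Finset
namespace St4

lemma S34_scale (y z x : ℂ) (m k l r : ℕ) (hr1 : 1 ≤ r) (hrm : r ≤ m)
    (hk : 1 ≤ k) (hl : 1 ≤ l) :
    ((2*m-r : ℕ) : ℂ) * ((m+1-r : ℕ) : ℂ) * (S3 y z x m k l r - S3 z y x m l k r)
      = ((2*m+1-r : ℕ) : ℂ) * ((∑ s ∈ Icc (r+1-1) (m+1), (((k+m+1-(s) : ℕ) : ℂ) * (((m+k-(s)).choose (m+1-(s)) : ℂ) * (((s)+l-(r+1)).choose ((s)+1-(r+1)) : ℂ) * (-1)^(k+l) * ((2*m+1-(s) : ℕ) : ℂ) * ((2*(s)+1-(r+1) : ℕ) : ℂ)) / ((y-x)^(k+m+1-(s)+1) * (z-x)^(l+(s)+1-(r+1))) + ((l+(s)+1-(r+1) : ℕ) : ℂ) * (((m+k-(s)).choose (m+1-(s)) : ℂ) * (((s)+l-(r+1)).choose ((s)+1-(r+1)) : ℂ) * (-1)^(k+l) * ((2*m+1-(s) : ℕ) : ℂ)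 * ((2*(s)+1-(r+1) : ℕ) : ℂ)) / ((y-x)^(k+m+1-(s)) * (z-x)^(l+(s)+1-(r+1)+1)))) - (∑ s ∈ Icc (r+1-1) (m+1), (((l+(s)+1-(r+1) : ℕ) : ℂ) * (((l+(s)-(r+1)).choose ((s)+1-(r+1)) : ℂ) * ((m+k-(s)).choose (m+1-(s)) : ℂ) * (-1)^(l+k) * ((m+(s)+1-(r+1) : ℕ) : ℂ) * ((2*m+(r+1)+1-2*(s) : ℕ) : ℂ)) / ((z-x)^(l+(s)+1-(r+1)+1) * (y-x)^(k+m+1-(s))) + ((k+m+1-(s) : ℕ) : ℂ) * (((l+(s)-(r+1)).choose ((s)+1-(r+1)) : ℂ) * ((m+k-(s)).choose (m+1-(s)) : ℂ) * (-1)^(l+k) * ((m+(s)+1-(r+1) : ℕ) : ℂ) * ((2*m+(r+1)+1-2*(s) : ℕ) : ℂ)) / ((z-x)^(l+(s)+1-(r+1)) * (y-x)^(k+m+1-(s)+1))))) := by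
  have hrefl := S3_reflect z y x m l k r hr1 (by omega)
  rw [S3, hrefl, ← Finset.sum_sub_distrib, Finset.mul_sum]
  simp only [Nat.add_sub_cancel]
  have hW : (∑ s ∈ Icc (r-1) (m+1), ((2*m-r : ℕ) : ℂ) * ((m+1-r : ℕ) : ℂ) * ((((m+k-(s)).choose (m+1-(s)) : ℂ) * (((s)+l-r).choose ((s)+1-r) : ℂ) * (-1)^(k+l) * ((2*m+1-(s) : ℕ) : ℂ) * ((2*(s)+1-r : ℕ) : ℂ) / ((y-x)^(k+m+1-(s)) * (z-x)^(l+(s)+1-r))) - (((l+(s)-r).choose ((s)+1-r) : ℂ) * ((m+k-(s)).choose (m+1-(s)) : ℂ) * (-1)^(l+k) * ((m+(s)+1-r : ℕ) : ℂ) * ((2*m+r+1-2*(s) : ℕ) : ℂ) / ((z-x)^(l+(s)+1-r) * (y-x)^(k+m+1-(s))))))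
      = (((2*m-r : ℕ) : ℂ) * ((m+1-r : ℕ) : ℂ) * ((((m+k-(r-1)).choose (m+1-(r-1)) : ℂ) * (((r-1)+l-r).choose ((r-1)+1-r) : ℂ) * (-1)^(k+l) * ((2*m+1-(r-1) : ℕ) : ℂ) * ((2*(r-1)+1-r : ℕ) : ℂ) / ((y-x)^(k+m+1-(r-1)) * (z-x)^(l+(r-1)+1-r))) - (((l+(r-1)-r).choose ((r-1)+1-r) : ℂ) * ((m+k-(r-1)).choose (m+1-(r-1)) : ℂ) * (-1)^(l+k) * ((m+(r-1)+1-r : ℕ) : ℂ) * ((2*m+r+1-2*(r-1) : ℕ) : ℂ) / ((z-x)^(l+(r-1)+1-r) * (y-x)^(k+m+1-(r-1)))))) + (∑ s ∈ Icc r m, ((2*m-r : ℕ) : ℂ) * ((m+1-r : ℕ) : ℂ) * ((((m+k-(s)).choose (m+1-(s)) : ℂ) * (((s)+l-r).choose ((s)+1-r) : ℂ) * (-1)^(k+l) * ((2*m+1-(s) : ℕ) : ℂ) * ((2*(s)+1-r : ℕ) : ℂ) / ((y-x)^(k+m+1-(s)) * (z-x)^(l+(s)+1-r))) - (((l+(s)-r).choose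 ((s)+1-r) : ℂ) * ((m+k-(s)).choose (m+1-(s)) : ℂ) * (-1)^(l+k) * ((m+(s)+1-r : ℕ) : ℂ) * ((2*m+r+1-2*(s) : ℕ) : ℂ) / ((z-x)^(l+(s)+1-r) * (y-x)^(k+m+1-(s)))))) + (((2*m-r : ℕ) : ℂ) * ((m+1-r : ℕ) : ℂ) * ((((m+k-(m+1)).choose (m+1-(m+1)) : ℂ) * (((m+1)+l-r).choose ((m+1)+1-r) : ℂ) * (-1)^(k+l) * ((2*m+1-(m+1) : ℕ) : ℂ) * ((2*(m+1)+1-r : ℕ) : ℂ) / ((y-x)^(k+m+1-(m+1)) * (z-x)^(l+(m+1)+1-r))) - (((l+(m+1)-r).choose ((m+1)+1-r) : ℂ) * ((m+k-(m+1)).choose (m+1-(m+1)) : ℂ) * (-1)^(l+k) * ((m+(m+1)+1-r : ℕ) : ℂ) * ((2*m+r+1-2*(m+1) : ℕ) : ℂ) / ((z-x)^(l+(m+1)+1-r) * (y-x)^(k+m+1-(m+1)))))) := by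
    rw [Icc_bot_peel (show r-1 ≤ m+1 from by omega)]
    rw [show r-1+1 = r from by omega]
    rw [Finset.sum_Icc_succ_top (show r ≤ m+1 from by omega)]
    ring
  have hGaS : (∑ s ∈ Icc (r-1) m, (((k+m+1-(s+1) : ℕ) : ℂ) * (((m+k-(s+1)).choose (m+1-(s+1)) : ℂ) * (((s+1)+l-(r+1)).choose ((s+1)+1-(r+1)) : ℂ) * (-1)^(k+l) * ((2*m+1-(s+1) : ℕ) : ℂ) * ((2*(s+1)+1-(r+1) : ℕ) : ℂ)) / ((y-x)^(k+m+1-(s+1)+1) * (z-x)^(l+(s+1)+1-(r+1))) - (((k+m+1-(s+1) : ℕ) : ℂ) * (((l+(s+1)-(r+1)).choose ((s+1)+1-(r+1)) : ℂ) * ((m+k-(s+1)).choose (m+1-(s+1)) : ℂ) * (-1)^(l+k) * ((m+(s+1)+1-(r+1) : ℕ) : ℂ) * ((2*m+(r+1)+1-2*(s+1) : ℕ) : ℂ)) / ((z-x)^(l+(s+1)+1-(r+1)) * (y-x)^(k+m+1-(s+1)+1)))))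
      = ((((k+m+1-(r-1+1) : ℕ) : ℂ) * (((m+k-(r-1+1)).choose (m+1-(r-1+1)) : ℂ) * (((r-1+1)+l-(r+1)).choose ((r-1+1)+1-(r+1)) : ℂ) * (-1)^(k+l) * ((2*m+1-(r-1+1) : ℕ) : ℂ) * ((2*(r-1+1)+1-(r+1) : ℕ) : ℂ)) / ((y-x)^(k+m+1-(r-1+1)+1) * (z-x)^(l+(r-1+1)+1-(r+1))) - (((k+m+1-(r-1+1) : ℕ) : ℂ) * (((l+(r-1+1)-(r+1)).choose ((r-1+1)+1-(r+1)) : ℂ) * ((m+k-(r-1+1)).choose (m+1-(r-1+1)) : ℂ) * (-1)^(l+k) * ((m+(r-1+1)+1-(r+1) : ℕ) : ℂ) * ((2*m+(r+1)+1-2*(r-1+1) : ℕ) : ℂ)) / ((z-x)^(l+(r-1+1)+1-(r+1)) * (y-x)^(k+m+1-(r-1+1)+1))))) + ∑ s ∈ Icc r m, (((k+m+1-(s+1) : ℕ) : ℂ) * (((m+k-(s+1)).choose (m+1-(s+1)) : ℂ) * (((s+1)+l-(r+1)).choose ((s+1)+1-(r+1)) : ℂ) * (-1)^(k+l) * ((2*m+1-(s+1)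 : ℕ) : ℂ) * ((2*(s+1)+1-(r+1) : ℕ) : ℂ)) / ((y-x)^(k+m+1-(s+1)+1) * (z-x)^(l+(s+1)+1-(r+1))) - (((k+m+1-(s+1) : ℕ) : ℂ) * (((l+(s+1)-(r+1)).choose ((s+1)+1-(r+1)) : ℂ) * ((m+k-(s+1)).choose (m+1-(s+1)) : ℂ) * (-1)^(l+k) * ((m+(s+1)+1-(r+1) : ℕ) : ℂ) * ((2*m+(r+1)+1-2*(s+1) : ℕ) : ℂ)) / ((z-x)^(l+(s+1)+1-(r+1)) * (y-x)^(k+m+1-(s+1)+1)))) := by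
    rw [Icc_bot_peel (show r-1 ≤ m from by omega)]
    rw [show r-1+1 = r from by omega]
  have hshift : (∑ s ∈ Icc (r-1) m, (((k+m+1-(s+1) : ℕ) : ℂ) * (((m+k-(s+1)).choose (m+1-(s+1)) : ℂ) * (((s+1)+l-(r+1)).choose ((s+1)+1-(r+1)) : ℂ) * (-1)^(k+l) * ((2*m+1-(s+1) : ℕ) : ℂ) * ((2*(s+1)+1-(r+1) : ℕ) : ℂ)) / ((y-x)^(k+m+1-(s+1)+1) * (z-x)^(l+(s+1)+1-(r+1))) - (((k+m+1-(s+1) : ℕ) : ℂ) * (((l+(s+1)-(r+1)).choose ((s+1)+1-(r+1)) : ℂ) * ((m+k-(s+1)).choose (m+1-(s+1)) : ℂ) * (-1)^(l+k) * ((m+(s+1)+1-(r+1) : ℕ) : ℂ) * ((2*m+(r+1)+1-2*(s+1) : ℕ) : ℂ)) / ((z-x)^(l+(s+1)+1-(r+1)) * (y-x)^(k+m+1-(s+1)+1))))) = ∑ s ∈ Icc r (m+1), (((k+m+1-(s) : ℕ) : ℂ) * (((m+k-(s)).choose (m+1-(s)) : ℂ) * (((s)+l-(r+1)).choose ((s)+1-(r+1))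 : ℂ) * (-1)^(k+l) * ((2*m+1-(s) : ℕ) : ℂ) * ((2*(s)+1-(r+1) : ℕ) : ℂ)) / ((y-x)^(k+m+1-(s)+1) * (z-x)^(l+(s)+1-(r+1))) - (((k+m+1-(s) : ℕ) : ℂ) * (((l+(s)-(r+1)).choose ((s)+1-(r+1)) : ℂ) * ((m+k-(s)).choose (m+1-(s)) : ℂ) * (-1)^(l+k) * ((m+(s)+1-(r+1) : ℕ) : ℂ) * ((2*m+(r+1)+1-2*(s) : ℕ) : ℂ)) / ((z-x)^(l+(s)+1-(r+1)) * (y-x)^(k+m+1-(s)+1)))) := by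
    have h := Icc_shift (r-1) m (fun s => (((k+m+1-(s+1) : ℕ) : ℂ) * (((m+k-(s+1)).choose (m+1-(s+1)) : ℂ) * (((s+1)+l-(r+1)).choose ((s+1)+1-(r+1)) : ℂ) * (-1)^(k+l) * ((2*m+1-(s+1) : ℕ) : ℂ) * ((2*(s+1)+1-(r+1) : ℕ) : ℂ)) / ((y-x)^(k+m+1-(s+1)+1) * (z-x)^(l+(s+1)+1-(r+1))) - (((k+m+1-(s+1) : ℕ) : ℂ) * (((l+(s+1)-(r+1)).choose ((s+1)+1-(r+1)) : ℂ) * ((m+k-(s+1)).choose (m+1-(s+1)) : ℂ) * (-1)^(l+k) * ((m+(s+1)+1-(r+1) : ℕ) : ℂ) * ((2*m+(r+1)+1-2*(s+1) : ℕ) : ℂ)) / ((z-x)^(l+(s+1)+1-(r+1)) * (y-x)^(k+m+1-(s+1)+1))))) (fun s => (((k+m+1-(s) : ℕ) : ℂ) * (((m+k-(s)).choose (m+1-(s)) : ℂ) * (((s)+l-(r+1)).choose ((s)+1-(r+1)) : ℂ) * (-1)^(k+l) * ((2*m+1-(s) : ℕ) : ℂ) * ((2*(s)+1-(r+1) : ℕ)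 : ℂ)) / ((y-x)^(k+m+1-(s)+1) * (z-x)^(l+(s)+1-(r+1))) - (((k+m+1-(s) : ℕ) : ℂ) * (((l+(s)-(r+1)).choose ((s)+1-(r+1)) : ℂ) * ((m+k-(s)).choose (m+1-(s)) : ℂ) * (-1)^(l+k) * ((m+(s)+1-(r+1) : ℕ) : ℂ) * ((2*m+(r+1)+1-2*(s) : ℕ) : ℂ)) / ((z-x)^(l+(s)+1-(r+1)) * (y-x)^(k+m+1-(s)+1))))) (fun s _ _ => rfl)
    rw [show r-1+1 = r from by omega] at h
    exact h
  have hGb : (∑ s ∈ Icc r (m+1), (((l+(s)+1-(r+1) : ℕ) : ℂ) * (((m+k-(s)).choose (m+1-(s)) : ℂ) * (((s)+l-(r+1)).choose ((s)+1-(r+1)) : ℂ) * (-1)^(k+l) * ((2*m+1-(s) : ℕ) : ℂ) * ((2*(s)+1-(r+1) : ℕ) : ℂ)) / ((y-x)^(k+m+1-(s)) * (z-x)^(l+(s)+1-(r+1)+1)) - (((l+(s)+1-(r+1) : ℕ) : ℂ) * (((l+(s)-(r+1)).choose ((s)+1-(r+1)) : ℂ) * ((m+k-(s)).choose (m+1-(s))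 : ℂ) * (-1)^(l+k) * ((m+(s)+1-(r+1) : ℕ) : ℂ) * ((2*m+(r+1)+1-2*(s) : ℕ) : ℂ)) / ((z-x)^(l+(s)+1-(r+1)+1) * (y-x)^(k+m+1-(s))))))
      = (∑ s ∈ Icc r m, (((l+(s)+1-(r+1) : ℕ) : ℂ) * (((m+k-(s)).choose (m+1-(s)) : ℂ) * (((s)+l-(r+1)).choose ((s)+1-(r+1)) : ℂ) * (-1)^(k+l) * ((2*m+1-(s) : ℕ) : ℂ) * ((2*(s)+1-(r+1) : ℕ) : ℂ)) / ((y-x)^(k+m+1-(s)) * (z-x)^(l+(s)+1-(r+1)+1)) - (((l+(s)+1-(r+1) : ℕ) : ℂ) * (((l+(s)-(r+1)).choose ((s)+1-(r+1)) : ℂ) * ((m+k-(s)).choose (m+1-(s)) : ℂ) * (-1)^(l+k) * ((m+(s)+1-(r+1) : ℕ) : ℂ) * ((2*m+(r+1)+1-2*(s) : ℕ) : ℂ)) / ((z-x)^(l+(s)+1-(r+1)+1) * (y-x)^(k+m+1-(s)))))) + ((((l+(m+1)+1-(r+1) : ℕ) : ℂ) * (((m+k-(m+1)).choose (m+1-(m+1))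 : ℂ) * (((m+1)+l-(r+1)).choose ((m+1)+1-(r+1)) : ℂ) * (-1)^(k+l) * ((2*m+1-(m+1) : ℕ) : ℂ) * ((2*(m+1)+1-(r+1) : ℕ) : ℂ)) / ((y-x)^(k+m+1-(m+1)) * (z-x)^(l+(m+1)+1-(r+1)+1)) - (((l+(m+1)+1-(r+1) : ℕ) : ℂ) * (((l+(m+1)-(r+1)).choose ((m+1)+1-(r+1)) : ℂ) * ((m+k-(m+1)).choose (m+1-(m+1)) : ℂ) * (-1)^(l+k) * ((m+(m+1)+1-(r+1) : ℕ) : ℂ) * ((2*m+(r+1)+1-2*(m+1) : ℕ) : ℂ)) / ((z-x)^(l+(m+1)+1-(r+1)+1) * (y-x)^(k+m+1-(m+1)))))) :=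
    Finset.sum_Icc_succ_top (show r ≤ m+1 from by omega) _
  have hsplit : ((∑ s ∈ Icc r (m+1), (((k+m+1-(s) : ℕ) : ℂ) * (((m+k-(s)).choose (m+1-(s)) : ℂ) * (((s)+l-(r+1)).choose ((s)+1-(r+1)) : ℂ) * (-1)^(k+l) * ((2*m+1-(s) : ℕ) : ℂ) * ((2*(s)+1-(r+1) : ℕ) : ℂ)) / ((y-x)^(k+m+1-(s)+1) * (z-x)^(l+(s)+1-(r+1))) + ((l+(s)+1-(r+1) : ℕ) : ℂ) * (((m+k-(s)).choose (m+1-(s)) : ℂ) * (((s)+l-(r+1)).choose ((s)+1-(r+1)) : ℂ) * (-1)^(k+l) * ((2*m+1-(s) : ℕ) : ℂ) * ((2*(s)+1-(r+1) : ℕ) : ℂ)) / ((y-x)^(k+m+1-(s)) * (z-x)^(l+(s)+1-(r+1)+1)))) - (∑ s ∈ Icc r (m+1), (((l+(s)+1-(r+1) : ℕ) : ℂ) * (((l+(s)-(r+1)).choose ((s)+1-(r+1)) : ℂ) * ((m+k-(s)).choose (m+1-(s)) : ℂ) * (-1)^(l+k) * ((m+(s)+1-(r+1) : ℕ) : ℂ)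 * ((2*m+(r+1)+1-2*(s) : ℕ) : ℂ)) / ((z-x)^(l+(s)+1-(r+1)+1) * (y-x)^(k+m+1-(s))) + ((k+m+1-(s) : ℕ) : ℂ) * (((l+(s)-(r+1)).choose ((s)+1-(r+1)) : ℂ) * ((m+k-(s)).choose (m+1-(s)) : ℂ) * (-1)^(l+k) * ((m+(s)+1-(r+1) : ℕ) : ℂ) * ((2*m+(r+1)+1-2*(s) : ℕ) : ℂ)) / ((z-x)^(l+(s)+1-(r+1)) * (y-x)^(k+m+1-(s)+1)))))
      = (∑ s ∈ Icc r (m+1), (((k+m+1-(s) : ℕ) : ℂ) * (((m+k-(s)).choose (m+1-(s)) : ℂ) * (((s)+l-(r+1)).choose ((s)+1-(r+1)) : ℂ) * (-1)^(k+l) * ((2*m+1-(s) : ℕ) : ℂ) * ((2*(s)+1-(r+1) : ℕ) : ℂ)) / ((y-x)^(k+m+1-(s)+1) * (z-x)^(l+(s)+1-(r+1))) - (((k+m+1-(s) : ℕ) : ℂ) * (((l+(s)-(r+1)).choose ((s)+1-(r+1)) : ℂ) * ((m+k-(s)).choose (m+1-(s)) : ℂ) * (-1)^(l+k) * ((m+(s)+1-(r+1)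 : ℕ) : ℂ) * ((2*m+(r+1)+1-2*(s) : ℕ) : ℂ)) / ((z-x)^(l+(s)+1-(r+1)) * (y-x)^(k+m+1-(s)+1))))) + ∑ s ∈ Icc r (m+1), (((l+(s)+1-(r+1) : ℕ) : ℂ) * (((m+k-(s)).choose (m+1-(s)) : ℂ) * (((s)+l-(r+1)).choose ((s)+1-(r+1)) : ℂ) * (-1)^(k+l) * ((2*m+1-(s) : ℕ) : ℂ) * ((2*(s)+1-(r+1) : ℕ) : ℂ)) / ((y-x)^(k+m+1-(s)) * (z-x)^(l+(s)+1-(r+1)+1)) - (((l+(s)+1-(r+1) : ℕ) : ℂ) * (((l+(s)-(r+1)).choose ((s)+1-(r+1)) : ℂ) * ((m+k-(s)).choose (m+1-(s)) : ℂ) * (-1)^(l+k) * ((m+(s)+1-(r+1) : ℕ) : ℂ) * ((2*m+(r+1)+1-2*(s) : ℕ) : ℂ)) / ((z-x)^(l+(s)+1-(r+1)+1) * (y-x)^(k+m+1-(s))))) := by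
    rw [← Finset.sum_sub_distrib, ← Finset.sum_add_distrib]
    exact Finset.sum_congr rfl fun s _ => by ring
  rw [hW, hsplit, ← hshift, hGaS, hGb]
  have hmid : (∑ s ∈ Icc r m, ((2*m-r : ℕ) : ℂ) * ((m+1-r : ℕ) : ℂ) * ((((m+k-(s)).choose (m+1-(s)) : ℂ) * (((s)+l-r).choose ((s)+1-r) : ℂ) * (-1)^(k+l) * ((2*m+1-(s) : ℕ) : ℂ) * ((2*(s)+1-r : ℕ) : ℂ) / ((y-x)^(k+m+1-(s)) * (z-x)^(l+(s)+1-r))) - (((l+(s)-r).choose ((s)+1-r) : ℂ) * ((m+k-(s)).choose (m+1-(s)) : ℂ) * (-1)^(l+k) * ((m+(s)+1-r : ℕ) : ℂ) * ((2*m+r+1-2*(s) : ℕ) : ℂ) / ((z-x)^(l+(s)+1-r) * (y-x)^(k+m+1-(s))))))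
      = ((2*m+1-r : ℕ) : ℂ) * ((∑ s ∈ Icc r m, (((k+m+1-(s+1) : ℕ) : ℂ) * (((m+k-(s+1)).choose (m+1-(s+1)) : ℂ) * (((s+1)+l-(r+1)).choose ((s+1)+1-(r+1)) : ℂ) * (-1)^(k+l) * ((2*m+1-(s+1) : ℕ) : ℂ) * ((2*(s+1)+1-(r+1) : ℕ) : ℂ)) / ((y-x)^(k+m+1-(s+1)+1) * (z-x)^(l+(s+1)+1-(r+1))) - (((k+m+1-(s+1) : ℕ) : ℂ) * (((l+(s+1)-(r+1)).choose ((s+1)+1-(r+1)) : ℂ) * ((m+k-(s+1)).choose (m+1-(s+1)) : ℂ) * (-1)^(l+k) * ((m+(s+1)+1-(r+1) : ℕ) : ℂ) * ((2*m+(r+1)+1-2*(s+1) : ℕ) : ℂ)) / ((z-x)^(l+(s+1)+1-(r+1)) * (y-x)^(k+m+1-(s+1)+1))))) + ∑ s ∈ Icc r m, (((l+(s)+1-(r+1) : ℕ) : ℂ) * (((m+k-(s)).choose (m+1-(s)) : ℂ) * (((s)+l-(r+1)).choose ((s)+1-(r+1)) : ℂ) * (-1)^(k+l) * ((2*m+1-(s)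 : ℕ) : ℂ) * ((2*(s)+1-(r+1) : ℕ) : ℂ)) / ((y-x)^(k+m+1-(s)) * (z-x)^(l+(s)+1-(r+1)+1)) - (((l+(s)+1-(r+1) : ℕ) : ℂ) * (((l+(s)-(r+1)).choose ((s)+1-(r+1)) : ℂ) * ((m+k-(s)).choose (m+1-(s)) : ℂ) * (-1)^(l+k) * ((m+(s)+1-(r+1) : ℕ) : ℂ) * ((2*m+(r+1)+1-2*(s) : ℕ) : ℂ)) / ((z-x)^(l+(s)+1-(r+1)+1) * (y-x)^(k+m+1-(s)))))) := by
    rw [← Finset.sum_add_distrib, Finset.mul_sum]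
    refine Finset.sum_congr rfl fun s hs => ?_
    simp only [mem_Icc] at hs
    have h := e2term y z x m k l r s hr1 hk hl hs.1 hs.2
    linear_combination h
  have he1 := e1term y z x m k l r hr1 hrm hk hl
  have he3 := e3term y z x m k l r hr1 hrm hk hl
  linear_combination he1 + he3 + hmid

lemma stepR (y z : ℂ) (hyz : y ≠ z) (m k l r : ℕ) (hk : 1 ≤ k) (hl : 1 ≤ l)
    (hr1 : 1 ≤ r) (hrm : r ≤ m)
    (IH : ∀ t : ℂ, t ≠ y → t ≠ z →
      S1 y z t m k l (r+1) - S1 z y t m l k (r+1) = S3 y z t m k l (r+1) - S3 z y t m l k (r+1))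
    (x : ℂ) (hxy : x ≠ y) (hxz : x ≠ z) :
    S1 y z x m k l r - S1 z y x m l k r = S3 y z x m k l r - S3 z y x m l k r := by
  have hzy : (z : ℂ) - y ≠ 0 := sub_ne_zero.mpr (Ne.symm hyz)
  have hyz' : (y : ℂ) - z ≠ 0 := sub_ne_zero.mpr hyz
  have hd1 : HasDerivAt (fun t => S1 y z t m k l (r+1)) (∑ s ∈ Icc 1 (k+1), ((m+s+1-(r+1) : ℕ) : ℂ) * (((k+l-s).choose (k+1-s) : ℂ) * ((m+s-(r+1)).choose (m+1-(r+1)) : ℂ) * (-1)^(l+s) * ((2*k+1-s : ℕ) : ℂ) * ((2*m+1-(r+1) : ℕ) : ℂ)) / ((z-y)^(l+k+1-s) * (y-x)^(m+s+1-(r+1)+1))) x := by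
    simp only [S1]
    exact sumDeriv1 (fun s => ((k+l-s).choose (k+1-s) : ℂ) * ((m+s-(r+1)).choose (m+1-(r+1)) : ℂ) * (-1)^(l+s) * ((2*k+1-s : ℕ) : ℂ) * ((2*m+1-(r+1) : ℕ) : ℂ)) (fun s => (z-y)^(l+k+1-s)) (fun s => m+s+1-(r+1))
      (Icc 1 (k+1)) y x (Ne.symm hxy) (fun s _ => pow_ne_zero _ hzy)
      (fun s hs => by simp only [mem_Icc] at hs; show 1 ≤ m+s+1-(r+1); omega)
  have hd2 : HasDerivAt (fun t => S1 z y t m l k (r+1)) (∑ s ∈ Icc 1 (l+1), ((m+s+1-(r+1) : ℕ) : ℂ) * (((l+k-s).choose (l+1-s) : ℂ) * ((m+s-(r+1)).choose (m+1-(r+1)) : ℂ) * (-1)^(k+s) * ((2*l+1-s : ℕ) : ℂ) * ((2*m+1-(r+1) : ℕ) : ℂ)) / ((y-z)^(k+l+1-s) * (z-x)^(m+s+1-(r+1)+1))) x := by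
    simp only [S1]
    exact sumDeriv1 (fun s => ((l+k-s).choose (l+1-s) : ℂ) * ((m+s-(r+1)).choose (m+1-(r+1)) : ℂ) * (-1)^(k+s) * ((2*l+1-s : ℕ) : ℂ) * ((2*m+1-(r+1) : ℕ) : ℂ)) (fun s => (y-z)^(k+l+1-s)) (fun s => m+s+1-(r+1))
      (Icc 1 (l+1)) z x (Ne.symm hxz) (fun s _ => pow_ne_zero _ hyz')
      (fun s hs => by simp only [mem_Icc] at hs; show 1 ≤ m+s+1-(r+1); omega)
  have hd3 : HasDerivAt (fun t => S3 y z t m k l (r+1)) (∑ s ∈ Icc (r+1-1) (m+1), (((k+m+1-(s) : ℕ) : ℂ) * (((m+k-(s)).choose (m+1-(s)) : ℂ) * (((s)+l-(r+1)).choose ((s)+1-(r+1)) : ℂ) * (-1)^(k+l) * ((2*m+1-(s) : ℕ) : ℂ) * ((2*(s)+1-(r+1) : ℕ) : ℂ)) / ((y-x)^(k+m+1-(s)+1) * (z-x)^(l+(s)+1-(r+1))) + ((l+(s)+1-(r+1) : ℕ) : ℂ) * (((m+k-(s)).choose (m+1-(s)) : ℂ) * (((s)+l-(r+1)).choose ((s)+1-(r+1))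 : ℂ) * (-1)^(k+l) * ((2*m+1-(s) : ℕ) : ℂ) * ((2*(s)+1-(r+1) : ℕ) : ℂ)) / ((y-x)^(k+m+1-(s)) * (z-x)^(l+(s)+1-(r+1)+1)))) x := by
    simp only [S3]
    exact sumDeriv2 (fun s => ((m+k-(s)).choose (m+1-(s)) : ℂ) * (((s)+l-(r+1)).choose ((s)+1-(r+1)) : ℂ) * (-1)^(k+l) * ((2*m+1-(s) : ℕ) : ℂ) * ((2*(s)+1-(r+1) : ℕ) : ℂ)) (fun s => k+m+1-s) (fun s => l+s+1-(r+1))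
      (Icc (r+1-1) (m+1)) y z x (Ne.symm hxy) (Ne.symm hxz)
      (fun s hs => by simp only [mem_Icc] at hs; show 1 ≤ k+m+1-s; omega)
      (fun s hs => by simp only [mem_Icc] at hs; show 1 ≤ l+s+1-(r+1); omega)
  have hd4 : HasDerivAt (fun t => S3 z y t m l k (r+1)) (∑ s ∈ Icc (r+1-1) (m+1), (((l+(s)+1-(r+1) : ℕ) : ℂ) * (((l+(s)-(r+1)).choose ((s)+1-(r+1)) : ℂ) * ((m+k-(s)).choose (m+1-(s)) : ℂ) * (-1)^(l+k) * ((m+(s)+1-(r+1) : ℕ) : ℂ) * ((2*m+(r+1)+1-2*(s) : ℕ) : ℂ)) / ((z-x)^(l+(s)+1-(r+1)+1) * (y-x)^(k+m+1-(s))) + ((k+m+1-(s) : ℕ) : ℂ) * (((l+(s)-(r+1)).choose ((s)+1-(r+1)) : ℂ) * ((m+k-(s)).choose (m+1-(s)) : ℂ) * (-1)^(l+k) * ((m+(s)+1-(r+1) : ℕ) : ℂ) * ((2*m+(r+1)+1-2*(s) : ℕ) : ℂ)) / ((z-x)^(l+(s)+1-(r+1)) * (y-x)^(k+m+1-(s)+1))))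 x := by
    have hfun : (fun t => S3 z y t m l k (r+1))
        = (fun t => ∑ s ∈ Icc (r+1-1) (m+1),
            ((l+(s)-(r+1)).choose ((s)+1-(r+1)) : ℂ) * ((m+k-(s)).choose (m+1-(s)) : ℂ) * (-1)^(l+k) * ((m+(s)+1-(r+1) : ℕ) : ℂ) * ((2*m+(r+1)+1-2*(s) : ℕ) : ℂ) / ((z-t)^(l+(s)+1-(r+1)) * (y-t)^(k+m+1-(s)))) :=
      funext fun t => S3_reflect z y t m l k (r+1) (by omega) (by omega)
    rw [hfun]
    exact sumDeriv2 (fun s => ((l+(s)-(r+1)).choose ((s)+1-(r+1)) : ℂ) * ((m+k-(s)).choose (m+1-(s)) : ℂ) * (-1)^(l+k) * ((m+(s)+1-(r+1) : ℕ) : ℂ) * ((2*m+(r+1)+1-2*(s) : ℕ) : ℂ)) (fun s => l+s+1-(r+1)) (fun s => k+m+1-s)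
      (Icc (r+1-1) (m+1)) z y x (Ne.symm hxz) (Ne.symm hxy)
      (fun s hs => by simp only [mem_Icc] at hs; show 1 ≤ l+s+1-(r+1); omega)
      (fun s hs => by simp only [mem_Icc] at hs; show 1 ≤ k+m+1-s; omega)
  have hF := ((hd1.sub hd2).sub hd3).add hd4
  have hopen : IsOpen ({t : ℂ | t ≠ y} ∩ {t : ℂ | t ≠ z}) := isOpen_ne.inter isOpen_ne
  have hzero : (fun _ : ℂ => (0:ℂ)) =ᶠ[nhds x]
      (fun t => S1 y z t m k l (r+1) - S1 z y t m l k (r+1)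
        - S3 y z t m k l (r+1) + S3 z y t m l k (r+1)) := by
    filter_upwards [hopen.mem_nhds ⟨hxy, hxz⟩] with t ht
    linear_combination -(IH t ht.1 ht.2)
  have hF0 := hF.congr_of_eventuallyEq hzero
  have hd0 := hF0.unique (hasDerivAt_const x 0)
  have h1 := S1_scale y z x m k l r hr1 hrm
  have h2 := S1_scale z y x m l k r hr1 hrm
  have h34 := S34_scale y z x m k l r hr1 hrm hk hl
  have hNZ : ((2*m-r : ℕ) : ℂ) * ((m+1-r : ℕ) : ℂ) ≠ 0 := by
    apply mul_ne_zero <;> · rw [Nat.cast_ne_zero]; omega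
  have key : ((2*m-r : ℕ) : ℂ) * ((m+1-r : ℕ) : ℂ) *
      ((S1 y z x m k l r - S1 z y x m l k r) - (S3 y z x m k l r - S3 z y x m l k r)) = 0 := by
    linear_combination h1 - h2 - h34 + ((2*m+1-r : ℕ) : ℂ) * hd0
  rcases mul_eq_zero.mp key with h | h
  · exact absurd h hNZ
  · linear_combination h

lemma baseR (y z x : ℂ) (hxy : x ≠ y) (hyz : y ≠ z) (hxz : x ≠ z) (m k l : ℕ)
    (hm : 1 ≤ m) (hk : 1 ≤ k) (hl : 1 ≤ l) :
    S1 y z x m k l (m+1) - S1 z y x m l k (m+1)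
      = S3 y z x m k l (m+1) - S3 z y x m l k (m+1) := by
  rw [S1_top, S1_top, S3_top y z x m k l hm hk hl, S3_top z y x m l k hm hl hk]
  have hB := Bident (k+l) k l rfl hk hl x y z hxy hyz hxz
  unfold RB at hB
  rw [show l+k = k+l from by omega]
  linear_combination (m : ℂ) * hB

lemma mainR (y z : ℂ) (hyz : y ≠ z) (m k l : ℕ) (hm : 1 ≤ m) (hk : 1 ≤ k) (hl : 1 ≤ l) :
    ∀ d r : ℕ, 1 ≤ r → r + d = m + 1 → ∀ x : ℂ, x ≠ y → x ≠ z →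
      S1 y z x m k l r - S1 z y x m l k r = S3 y z x m k l r - S3 z y x m l k r := by
  intro d
  induction d with
  | zero =>
    intro r hr1 hrd x hxy hxz
    obtain rfl : r = m+1 := by omega
    exact baseR y z x hxy hyz hxz m k l hm hk hl
  | succ d ih =>
    intro r hr1 hrd x hxy hxz
    exact stepR y z hyz m k l r hk hl hr1 (by omega)
      (fun t h1 h2 => ih (r+1) (by omega) (by omega) t h1 h2) x hxy hxz

end St4
end FINAL

/-- STATEMENT 4: the combinatorial identity of Corollary 2.1, for pairwise distinct
`x, y, z ∈ ℂ`, positive integers `m, k, l` and `1 ≤ r ≤ m + 1`. -/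
theorem statement4 (x y z : ℂ) (hxy : x ≠ y) (hyz : y ≠ z) (hxz : x ≠ z)
    (m k l : ℕ) (hm : 1 ≤ m) (hk : 1 ≤ k) (hl : 1 ≤ l)
    (r : ℕ) (hr1 : 1 ≤ r) (hr2 : r ≤ m + 1) :
    (∑ s ∈ Finset.Icc 1 (k + 1),
        ((k + l - s).choose (k + 1 - s) : ℂ) * ((m + s - r).choose (m + 1 - r) : ℂ) *
          (-1 : ℂ) ^ (l + s) * ((2 * k + 1 - s : ℕ) : ℂ) * ((2 * m + 1 - r : ℕ) : ℂ) /
          ((z - y) ^ (l + k + 1 - s) * (y - x) ^ (m + s + 1 - r)))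
    - (∑ s ∈ Finset.Icc 1 (l + 1),
        ((l + k - s).choose (l + 1 - s) : ℂ) * ((m + s - r).choose (m + 1 - r) : ℂ) *
          (-1 : ℂ) ^ (k + s) * ((2 * l + 1 - s : ℕ) : ℂ) * ((2 * m + 1 - r : ℕ) : ℂ) /
          ((y - z) ^ (l + k + 1 - s) * (z - x) ^ (m + s + 1 - r)))
    = (∑ s ∈ Finset.Icc (r - 1) (m + 1),
        ((m + k - s).choose (m + 1 - s) : ℂ) * ((s + l - r).choose (s + 1 - r) : ℂ) *
          (-1 : ℂ) ^ (k + l) * ((2 * m + 1 - s : ℕ) : ℂ) * ((2 * s + 1 - r : ℕ) : ℂ) /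
          ((y - x) ^ (k + m + 1 - s) * (z - x) ^ (l + s + 1 - r)))
    - (∑ s ∈ Finset.Icc (r - 1) (m + 1),
        ((m + l - s).choose (m + 1 - s) : ℂ) * ((s + k - r).choose (s + 1 - r) : ℂ) *
          (-1 : ℂ) ^ (k + l) * ((2 * m + 1 - s : ℕ) : ℂ) * ((2 * s + 1 - r : ℕ) : ℂ) /
          ((z - x) ^ (l + m + 1 - s) * (y - x) ^ (k + s + 1 - r))) := by
  have H := St4.mainR y z hyz m k l hm hk hl (m+1-r) r hr1 (by omega) x hxy hxz
  have h1 : St4.S1 y z x m k l r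
      = ∑ s ∈ Finset.Icc 1 (k + 1),
        ((k + l - s).choose (k + 1 - s) : ℂ) * ((m + s - r).choose (m + 1 - r) : ℂ) *
          (-1 : ℂ) ^ (l + s) * ((2 * k + 1 - s : ℕ) : ℂ) * ((2 * m + 1 - r : ℕ) : ℂ) /
          ((z - y) ^ (l + k + 1 - s) * (y - x) ^ (m + s + 1 - r)) := by
    rw [St4.S1]
  have h2 : St4.S1 z y x m l k r
      = ∑ s ∈ Finset.Icc 1 (l + 1),
        ((l + k - s).choose (l + 1 - s) : ℂ) * ((m + s - r).choose (m + 1 - r) : ℂ) *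
          (-1 : ℂ) ^ (k + s) * ((2 * l + 1 - s : ℕ) : ℂ) * ((2 * m + 1 - r : ℕ) : ℂ) /
          ((y - z) ^ (l + k + 1 - s) * (z - x) ^ (m + s + 1 - r)) := by
    rw [St4.S1]
    refine Finset.sum_congr rfl fun s hs => ?_
    rw [show k+l+1-s = l+k+1-s from by omega]
  have h3 : St4.S3 y z x m k l r
      = ∑ s ∈ Finset.Icc (r - 1) (m + 1),
        ((m + k - s).choose (m + 1 - s) : ℂ) * ((s + l - r).choose (s + 1 - r) : ℂ) *
          (-1 : ℂ) ^ (k + l) * ((2 * m + 1 - s : ℕ) : ℂ) * ((2 * s + 1 - r : ℕ) : ℂ) /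
          ((y - x) ^ (k + m + 1 - s) * (z - x) ^ (l + s + 1 - r)) := by
    rw [St4.S3]
  have h4 : St4.S3 z y x m l k r
      = ∑ s ∈ Finset.Icc (r - 1) (m + 1),
        ((m + l - s).choose (m + 1 - s) : ℂ) * ((s + k - r).choose (s + 1 - r) : ℂ) *
          (-1 : ℂ) ^ (k + l) * ((2 * m + 1 - s : ℕ) : ℂ) * ((2 * s + 1 - r : ℕ) : ℂ) /
          ((z - x) ^ (l + m + 1 - s) * (y - x) ^ (k + s + 1 - r)) := by
    rw [St4.S3]
    refine Finset.sum_congr rfl fun s hs => ?_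
    rw [show l+k = k+l from by omega]
  linear_combination H - h1 + h2 + h3 - h4
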